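/- Let V have dimension 2n, let U have dimension p with p ≤ n, let α : V × V → U be a symmetric bilinear map, and let β(X,Y) = (α(X,Y)+α(JX,JY), α(X,JY)-α(JX,Y)). Assume β is flat with respect to the signature-(p,p) bilinear form ⟨⟨,⟩⟩ on W = U × U and that its nullity satisfies ν(β) = 2(n-p). Then there exists a basis X₁, JX₁, …, X_n, JX_n of V such that: (i) N(β) = span{X_j, JX_j : p+1 ≤ j ≤ n}; (ii) β(Y_i, Y_j) = 0 whenever i ≠ j and Y_i ∈ span{X_i, JX_i}, Y_j ∈ span{X_j, JX_j}; (iii) the 2p vectors β(X_j, X_j), β(X_j, JX_j), 1 ≤ j ≤ p, form an orthonormal basis of W with respect to ⟨⟨,⟩⟩ (i.e. they are pairwise ⟨⟨,⟩⟩-orthogonal and each has ⟨⟨,⟩⟩-square-norm ±1). -/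

import Mathlib

open Module RealInnerProductSpace

universe u v

section CStruct
variable {V : Type u} [AddCommGroup V] [Module ℝ V]

noncomputable def jModule (J : V →ₗ[ℝ] V) (hJ : ∀ v, J (J v) = -v) : Module ℂ V :=
  letI : SMul ℂ V := ⟨fun z v => z.re • v + z.im • J v⟩
  Module.ofMinimalAxioms
    (fun r x y => by
      show r.re • (x + y) + r.im • J (x + y) = (r.re • x + r.im • J x) + (r.re • y + r.im • J y)
      rw [map_add]; module)
    (fun r s x => by
      show (r + s).re • x + (r + s).im • J x = (r.re • x + r.im • J x) + (s.re • x + s.im • J x)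
      rw [Complex.add_re, Complex.add_im]; module)
    (fun r s x => by
      show (r * s).re • x + (r * s).im • J x
        = r.re • (s.re • x + s.im • J x) + r.im • J (s.re • x + s.im • J x)
      rw [Complex.mul_re, Complex.mul_im, map_add, map_smul, map_smul, hJ]; module)
    (fun x => by
      show (1 : ℂ).re • x + (1 : ℂ).im • J x = x
      simp)
end CStruct

theorem jTower {V : Type u} [AddCommGroup V] [Module ℝ V] (J : V →ₗ[ℝ] V)
    (hJ : ∀ v, J (J v) = -v) :
    letI := jModule J hJ; IsScalarTower ℝ ℂ V := by
  letI := jModule J hJ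
  constructor
  intro r z v
  show ((r • z).re) • v + ((r • z).im) • J v = r • (z.re • v + z.im • J v)
  rw [Complex.real_smul, Complex.mul_re, Complex.mul_im]
  simp only [Complex.ofReal_re, Complex.ofReal_im]
  module

section CLin

variable {V : Type*} [AddCommGroup V] [Module ℝ V] [Module ℂ V]
  {W : Type*} [AddCommGroup W] [Module ℝ W] [Module ℂ W]

/-- Upgrade a real-linear map to a complex-linear map. -/
def toCLinear (f : V →ₗ[ℝ] W) (h : ∀ (z : ℂ) (v : V), f (z • v) = z • f v) : V →ₗ[ℂ] W where
  toFun := f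
  map_add' := f.map_add
  map_smul' := h

@[simp] theorem toCLinear_apply (f : V →ₗ[ℝ] W) (h) (v : V) : toCLinear f h v = f v := rfl

end CLin

/-- Common eigenvector for a commuting family. -/
theorem commonEigenvector : ∀ (k : ℕ) (W : Type v) [AddCommGroup W] [Module ℂ W]
    [FiniteDimensional ℂ W], finrank ℂ W ≤ k → Nontrivial W →
    ∀ S : Set (Module.End ℂ W), (∀ A ∈ S, ∀ B ∈ S, Commute A B) →
    ∃ w : W, w ≠ 0 ∧ ∀ A ∈ S, ∃ μ : ℂ, A w = μ • w := by
  intro k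
  induction k with
  | zero =>
    intro W _ _ _ hle hnt S _
    exfalso
    have := finrank_pos (R := ℂ) (M := W)
    omega
  | succ k ih =>
    intro W _ _ _ hle hnt S hS
    by_cases hsc : ∃ A ∈ S, ∃ μ : ℂ,
        Module.End.eigenspace A μ ≠ ⊥ ∧ Module.End.eigenspace A μ ≠ ⊤
    · obtain ⟨A, hA, μ, hne_bot, hne_top⟩ := hsc
      set E := Module.End.eigenspace A μ with hE
      have hinv : ∀ B ∈ S, ∀ x ∈ E, B x ∈ E := by
        intro B hB x hx
        rw [hE, Module.End.mem_eigenspace_iff] at hx ⊢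
        have hc : A (B x) = B (A x) := by
          rw [← Module.End.mul_apply, ← Module.End.mul_apply, hS A hA B hB]
        rw [hc, hx, map_smul]
      set S' : Set (Module.End ℂ E) :=
        {A' : Module.End ℂ E | ∃ B ∈ S, ∀ x : E, (A' x : W) = B (x : W)} with hS'
      have hcomm' : ∀ A' ∈ S', ∀ B' ∈ S', Commute A' B' := by
        rintro A' ⟨B₁, hB₁, h₁⟩ B' ⟨B₂, hB₂, h₂⟩
        refine LinearMap.ext fun x => Subtype.ext ?_
        have hc := hS B₁ hB₁ B₂ hB₂
        calc (A' (B' x) : W) = B₁ (B' x : W) := h₁ _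
          _ = B₁ (B₂ (x : W)) := by rw [h₂]
          _ = B₂ (B₁ (x : W)) := by
                rw [← Module.End.mul_apply, ← Module.End.mul_apply, hc]
          _ = B₂ ((A' x : E) : W) := by rw [← h₁]
          _ = (B' (A' x) : W) := (h₂ _).symm
      have hlt : finrank ℂ E < finrank ℂ W := Submodule.finrank_lt hne_top
      have hntE : Nontrivial E := Submodule.nontrivial_iff_ne_bot.mpr hne_bot
      obtain ⟨w, hw0, hw⟩ := ih E (by omega) hntE S' hcomm'
      refine ⟨(w : W), by simpa using hw0, ?_⟩
      intro B hB
      obtain ⟨μ', h'⟩ := hw (B.restrict (hinv B hB)) ⟨B, hB, fun x => rfl⟩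
      refine ⟨μ', ?_⟩
      have : ((B.restrict (hinv B hB)) w : W) = ((μ' • w : E) : W) := by rw [h']
      simpa using this
    · push_neg at hsc
      obtain ⟨w, hw⟩ := exists_ne (0 : W)
      refine ⟨w, hw, ?_⟩
      intro A hA
      obtain ⟨μ, hμ⟩ := Module.End.exists_eigenvalue A
      have htop : Module.End.eigenspace A μ = ⊤ := hsc A hA μ hμ
      exact ⟨μ, Module.End.mem_eigenspace_iff.mp (htop ▸ Submodule.mem_top)⟩


set_option maxHeartbeats 2000000 in
theorem stmt13_key : ∀ (p n : ℕ) (hpn : p ≤ n), ∀ (V : Type u) (U : Type v)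
    [AddCommGroup V] [Module ℝ V] [FiniteDimensional ℝ V]
    [NormedAddCommGroup U] [InnerProductSpace ℝ U] [FiniteDimensional ℝ U],
    ∀ (_hV : finrank ℝ V = 2 * n) (_hU : finrank ℝ U = p)
    (J : V →ₗ[ℝ] V) (hJ : ∀ v : V, J (J v) = -v)
    (β : V →ₗ[ℝ] V →ₗ[ℝ] (U × U))
    (_hsym : ∀ X Y : V, β Y X = ((β X Y).1, -(β X Y).2))
    (_hlin : ∀ X Y : V, β (J X) Y = (-(β X Y).2, (β X Y).1))
    (_hflat : ∀ X Y Z T : V,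
      ⟪(β X Y).1, (β Z T).1⟫ - ⟪(β X Y).2, (β Z T).2⟫ =
        ⟪(β X T).1, (β Z Y).1⟫ - ⟪(β X T).2, (β Z Y).2⟫)
    (_hnul : finrank ℝ ↥(⨅ X : V, LinearMap.ker (β X)) = 2 * (n - p)),
    ∃ X : Fin n → V,
      LinearIndependent ℝ (Sum.elim X (fun i : Fin n => J (X i))) ∧
      Submodule.span ℝ (Set.range (Sum.elim X (fun i : Fin n => J (X i)))) = ⊤ ∧
      (⨅ Z : V, LinearMap.ker (β Z)) =
        Submodule.span ℝ
          {v : V | ∃ j : Fin n, p ≤ (j : ℕ) ∧ (v = X j ∨ v = J (X j))} ∧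
      (∀ i j : Fin n, i ≠ j →
        ∀ Yi ∈ Submodule.span ℝ {X i, J (X i)},
          ∀ Yj ∈ Submodule.span ℝ {X j, J (X j)}, β Yi Yj = 0) ∧
      (∃ c : Fin p ⊕ Fin p → U × U,
        (∀ j : Fin p,
          c (Sum.inl j) = β (X (Fin.castLE hpn j)) (X (Fin.castLE hpn j))) ∧
        (∀ j : Fin p,
          c (Sum.inr j) = β (X (Fin.castLE hpn j)) (J (X (Fin.castLE hpn j)))) ∧
        LinearIndependent ℝ c ∧
        Submodule.span ℝ (Set.range c) = ⊤ ∧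
        (∀ a b : Fin p ⊕ Fin p, a ≠ b →
          ⟪(c a).1, (c b).1⟫ - ⟪(c a).2, (c b).2⟫ = 0) ∧
        (∀ a : Fin p ⊕ Fin p,
          ⟪(c a).1, (c a).1⟫ - ⟪(c a).2, (c a).2⟫ = 1 ∨
          ⟪(c a).1, (c a).1⟫ - ⟪(c a).2, (c a).2⟫ = -1)) := by
  intro p
  induction p with
  | zero =>
    intro n _hpn V U _ _ _ _ _ _ hV hU J hJ β hsym hlin hflat hnul
    haveI hUsub : Subsingleton U := finrank_zero_iff.mp hU
    haveI : Subsingleton (U × U) := inferInstance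
    letI : Module ℂ V := jModule J hJ
    haveI htower : IsScalarTower ℝ ℂ V := by
      constructor
      intro r z v
      show (r • z).re • v + (r • z).im • J v = r • ((z.re • v + z.im • J v : V))
      rw [Complex.real_smul, Complex.mul_re, Complex.mul_im]
      simp [Complex.ofReal_re, Complex.ofReal_im]
      module
    haveI : FiniteDimensional ℂ V := Module.Finite.of_restrictScalars_finite ℝ ℂ V
    have hVC : finrank ℂ V = n := by
      have h2 : finrank ℝ ℂ * finrank ℂ V = finrank ℝ V := Module.finrank_mul_finrank ℝ ℂ V
      rw [Complex.finrank_real_complex, hV] at h2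
      omega
    -- complex basis
    let b : Basis (Fin n) ℂ V := (Module.finBasis ℂ V).reindex (finCongr hVC)
    set X : Fin n → V := fun i => b i with hX
    -- real span of X, J X
    set s : Set V := Set.range (Sum.elim X (fun i : Fin n => J (X i))) with hs
    set S : Submodule ℝ V := Submodule.span ℝ s with hS
    have hXS : ∀ i, X i ∈ S := fun i => Submodule.subset_span ⟨Sum.inl i, rfl⟩
    have hJXS : ∀ i, J (X i) ∈ S := fun i => Submodule.subset_span ⟨Sum.inr i, rfl⟩
    have hJstable : ∀ v ∈ S, J v ∈ S := by
      intro v hv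
      have : S.map J ≤ S := by
        rw [hS, Submodule.map_span, Submodule.span_le]
        rintro _ ⟨_, ⟨a, rfl⟩, rfl⟩
        rcases a with i | i
        · exact hJXS i
        · show J (J (X i)) ∈ S
          rw [hJ]
          exact S.neg_mem (hXS i)
      exact this ⟨v, hv, rfl⟩
    let SC : Submodule ℂ V :=
      { carrier := (S : Set V)
        add_mem' := fun ha hb => S.add_mem ha hb
        zero_mem' := S.zero_mem
        smul_mem' := by
          intro z v hv
          show z.re • v + z.im • J v ∈ S
          exact S.add_mem (S.smul_mem _ hv) (S.smul_mem _ (hJstable v hv)) }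
    have hStop : S = ⊤ := by
      rw [Submodule.eq_top_iff']
      intro v
      have hv : v ∈ Submodule.span ℂ (Set.range X) := by
        have : Submodule.span ℂ (Set.range X) = ⊤ := by
          rw [hX]
          exact b.span_eq
        rw [this]; trivial
      have hle : Submodule.span ℂ (Set.range X) ≤ SC :=
        Submodule.span_le.mpr (fun x ⟨i, hi⟩ => hi ▸ hXS i)
      exact hle hv
    have hspan : Submodule.span ℝ s = ⊤ := hStop
    have hcard : Fintype.card (Fin n ⊕ Fin n) = finrank ℝ V := by
      simp [hV]; omega
    have hindep : LinearIndependent ℝ (Sum.elim X (fun i : Fin n => J (X i))) :=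
      linearIndependent_of_top_le_span_of_card_eq_finrank (hspan.ge) hcard
    refine ⟨X, hindep, hspan, ?_, ?_, ?_⟩
    · have hset : {v : V | ∃ j : Fin n, 0 ≤ (j : ℕ) ∧ (v = X j ∨ v = J (X j))} = s := by
        ext v
        constructor
        · rintro ⟨j, -, h | h⟩
          · exact ⟨Sum.inl j, h.symm⟩
          · exact ⟨Sum.inr j, h.symm⟩
        · rintro ⟨a, rfl⟩
          rcases a with i | i
          · exact ⟨i, Nat.zero_le _, Or.inl rfl⟩
          · exact ⟨i, Nat.zero_le _, Or.inr rfl⟩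
      rw [hset, hspan, Submodule.eq_top_iff']
      intro y
      rw [Submodule.mem_iInf]
      intro Z
      exact Subsingleton.elim _ _
    · intro i j _ Yi _ Yj _
      exact Subsingleton.elim _ _
    · refine ⟨Sum.elim Fin.elim0 Fin.elim0, fun j => j.elim0, fun j => j.elim0,
        linearIndependent_empty_type, Subsingleton.elim _ _,
        fun a => a.elim (fun i => i.elim0) (fun i => i.elim0),
        fun a => a.elim (fun i => i.elim0) (fun i => i.elim0)⟩
  | succ p ih =>
    intro n hpn V U _ _ _ _ _ _ hV hU J hJ β hsym hlin hflat hnul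
    obtain ⟨m, rfl⟩ : ∃ m, n = m + 1 := ⟨n - 1, by omega⟩
    set N : Submodule ℝ V := ⨅ X : V, LinearMap.ker (β X) with hN
    have hmemN : ∀ Y : V, Y ∈ N ↔ ∀ X : V, β X Y = 0 := by
      intro Y
      simp [hN, Submodule.mem_iInf, LinearMap.mem_ker]
    have hq2 : ∀ X : V, (β X X).2 = 0 := by
      intro X
      have h : (β X X).2 = -(β X X).2 := congrArg Prod.snd (hsym X X)
      have h2 : (2 : ℝ) • (β X X).2 = 0 := by
        rw [two_smul]
        nth_rewrite 1 [h]
        exact neg_add_cancel _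
      rcases smul_eq_zero.mp h2 with h' | h'
      · norm_num at h'
      · exact h'
    have hLA : ∀ X Y : V,
        ⟪(β X Y).1, (β X Y).1⟫ + ⟪(β X Y).2, (β X Y).2⟫ = ⟪(β X X).1, (β Y Y).1⟫ := by
      intro X Y
      have h := hflat X Y Y X
      rw [hsym X Y, hq2 X] at h
      simp only [inner_neg_right, inner_zero_left, inner_zero_right] at h
      linarith [h]
    have hqnn : ∀ X Y : V, 0 ≤ ⟪(β X X).1, (β Y Y).1⟫ := by
      intro X Y
      rw [← hLA X Y]
      exact add_nonneg real_inner_self_nonneg real_inner_self_nonneg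
    have hbzero : ∀ X Y : V, ⟪(β X X).1, (β Y Y).1⟫ = 0 → β X Y = 0 := by
      intro X Y h
      rw [← hLA X Y] at h
      have h1 : (β X Y).1 = 0 := by
        rw [← inner_self_eq_zero (𝕜 := ℝ)]
        have := real_inner_self_nonneg (x := (β X Y).1)
        have := real_inner_self_nonneg (x := (β X Y).2)
        linarith
      have h2 : (β X Y).2 = 0 := by
        rw [← inner_self_eq_zero (𝕜 := ℝ)]
        have := real_inner_self_nonneg (x := (β X Y).1)
        have := real_inner_self_nonneg (x := (β X Y).2)
        linarith
      exact Prod.ext h1 h2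
    have hzerob : ∀ X Y : V, β X Y = 0 → ⟪(β X X).1, (β Y Y).1⟫ = 0 := by
      intro X Y h
      rw [← hLA X Y, h]
      simp
    have hsym0 : ∀ X Y : V, β X Y = 0 → β Y X = 0 := by
      intro X Y h
      rw [hsym X Y, h]
      simp
    have hmemN' : ∀ Y : V, Y ∈ N ↔ (β Y Y).1 = 0 := by
      intro Y
      rw [hmemN]
      constructor
      · intro h
        exact congrArg Prod.fst (h Y)
      · intro h X
        apply hbzero X Y
        rw [h, inner_zero_right]
    -- regular element
    set Q : V → Submodule ℝ U := fun X =>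
      Submodule.span ℝ {u : U | ∃ Y : V, u = (β Y Y).1 ∧ ⟪(β X X).1, (β Y Y).1⟫ = 0} with hQ
    obtain ⟨X₀, hX₀⟩ : ∃ X₀ : V, ∀ X : V, finrank ℝ (Q X₀) ≤ finrank ℝ (Q X) := by
      have hne : (Set.range fun X : V => finrank ℝ (Q X)).Nonempty := ⟨_, 0, rfl⟩
      obtain ⟨X₀, hX₀⟩ := Nat.sInf_mem hne
      exact ⟨X₀, fun X => le_trans (le_of_eq hX₀) (Nat.sInf_le ⟨X, rfl⟩)⟩
    have hreg : ∀ Y : V, ⟪(β X₀ X₀).1, (β Y Y).1⟫ = 0 → (β Y Y).1 = 0 := by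
      intro Y horth
      by_contra hqY
      have hbo : β X₀ Y = 0 := hbzero _ _ horth
      have hbo' : β Y X₀ = 0 := hsym0 _ _ hbo
      set X' := X₀ + Y with hX'
      have hqX' : (β X' X').1 = (β X₀ X₀).1 + (β Y Y).1 := by
        have : β X' X' = β X₀ X₀ + β X₀ Y + (β Y X₀ + β Y Y) := by
          rw [hX', map_add, map_add β X₀ Y, LinearMap.add_apply, LinearMap.add_apply]
          abel
        rw [this, hbo, hbo']
        simp
      have hsplit : ∀ T : V, ⟪(β X' X').1, (β T T).1⟫ = 0 →
          ⟪(β X₀ X₀).1, (β T T).1⟫ = 0 ∧ ⟪(β Y Y).1, (β T T).1⟫ = 0 := by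
        intro T hT
        rw [hqX', inner_add_left] at hT
        have h1 := hqnn X₀ T
        have h2 := hqnn Y T
        constructor <;> linarith
      have hle : Q X' ≤ Q X₀ := by
        rw [hQ]
        apply Submodule.span_le.mpr
        rintro _ ⟨T, rfl, hT⟩
        exact Submodule.subset_span ⟨T, rfl, (hsplit T hT).1⟩
      have hYmem : (β Y Y).1 ∈ Q X₀ := Submodule.subset_span ⟨Y, rfl, horth⟩
      have hYnot : (β Y Y).1 ∉ Q X' := by
        intro hmem
        have hperp : Q X' ≤ (ℝ ∙ (β Y Y).1)ᗮ := by
          rw [hQ]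
          apply Submodule.span_le.mpr
          rintro _ ⟨T, rfl, hT⟩
          rw [SetLike.mem_coe, Submodule.mem_orthogonal_singleton_iff_inner_right]
          exact (hsplit T hT).2
        have := Submodule.mem_orthogonal_singleton_iff_inner_right.mp (hperp hmem)
        rw [inner_self_eq_zero (𝕜 := ℝ)] at this
        exact hqY this
      have hlt : Q X' < Q X₀ := lt_of_le_of_ne hle fun h => hYnot (h ▸ hYmem)
      have h1 := Submodule.finrank_lt_finrank_of_lt hlt
      have h2 := hX₀ X'
      omega
    have hkerN : LinearMap.ker (β X₀) = N := by
      ext Y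
      rw [LinearMap.mem_ker, hmemN' Y]
      constructor
      · intro h
        exact hreg Y (hzerob _ _ h)
      · intro h
        apply hbzero X₀ Y
        rw [h, inner_zero_right]
    have hfinW : finrank ℝ (U × U) = 2 * (p + 1) := by
      rw [Module.finrank_prod, hU]
      ring
    have hsurj0 : ∀ w : U × U, ∃ Y : V, β X₀ Y = w := by
      have hr : LinearMap.range (β X₀) = ⊤ := by
        apply Submodule.eq_top_of_finrank_eq
        have h1 := LinearMap.finrank_range_add_finrank_ker (β X₀)
        rw [hkerN, hnul, hV] at h1
        rw [hfinW]
        omega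
      intro w
      have : w ∈ LinearMap.range (β X₀) := hr ▸ Submodule.mem_top
      exact this
    have hsurj : ∀ w : U × U, ∃ Y : V, β Y X₀ = w := by
      intro w
      obtain ⟨Y, hY⟩ := hsurj0 (w.1, -w.2)
      refine ⟨Y, ?_⟩
      rw [hsym X₀ Y, hY]
      simp
    -- complex structures
    letI : Module ℂ V := jModule J hJ
    haveI : IsScalarTower ℝ ℂ V := jTower J hJ
    haveI : FiniteDimensional ℂ V := Module.Finite.of_restrictScalars_finite ℝ ℂ V
    set JW : (U × U) →ₗ[ℝ] (U × U) :=
      { toFun := fun w => (-w.2, w.1)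
        map_add' := fun a b => by ext <;> simp <;> abel
        map_smul' := fun r a => by ext <;> simp } with hJWdef
    have hJWapp : ∀ w : U × U, JW w = (-w.2, w.1) := fun w => rfl
    have hJW : ∀ w : U × U, JW (JW w) = -w := by
      intro w
      rw [hJWapp, hJWapp]
      ext <;> simp
    letI : Module ℂ (U × U) := jModule JW hJW
    haveI : IsScalarTower ℝ ℂ (U × U) := jTower JW hJW
    haveI : FiniteDimensional ℂ (U × U) := Module.Finite.of_restrictScalars_finite ℝ ℂ (U × U)
    have hlin2 : ∀ X Y : V, β X (J Y) = ((β X Y).2, -(β X Y).1) := by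
      intro X Y
      rw [hsym (J Y) X, hlin Y X, hsym X Y]
      simp
    have hJN : ∀ Y ∈ N, J Y ∈ N := by
      intro Y hY
      rw [hmemN] at hY ⊢
      intro X
      rw [hlin2 X Y, hY X]
      simp
    set NC : Submodule ℂ V :=
      { carrier := (N : Set V)
        add_mem' := fun ha hb => N.add_mem ha hb
        zero_mem' := N.zero_mem
        smul_mem' := by
          intro z Y hY
          show z.re • Y + z.im • J Y ∈ N
          exact N.add_mem (N.smul_mem _ hY) (N.smul_mem _ (hJN Y hY)) } with hNC
    obtain ⟨VC, hVCc⟩ := Submodule.exists_isCompl NC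
    have hCsmul : ∀ (X : V) (z : ℂ) (Y : V), β (z • Y) X = z • β Y X := by
      intro X z Y
      have h1 : z • Y = z.re • Y + z.im • J Y := rfl
      have h2 : z • (β Y X) = z.re • (β Y X) + z.im • JW (β Y X) := rfl
      rw [h1, h2, map_add, map_smul, map_smul, LinearMap.add_apply, LinearMap.smul_apply,
        LinearMap.smul_apply, hlin Y X]
      rfl
    set C : V → (V →ₗ[ℂ] (U × U)) := fun X => toCLinear (β.flip X) (fun z Y => by
      simpa using hCsmul X z Y) with hC
    have hCapp : ∀ (X Y : V), C X Y = β Y X := fun X Y => rfl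
    set C₀ : ↥VC →ₗ[ℂ] (U × U) := (C X₀).comp VC.subtype with hC₀def
    have hC₀ : ∀ Yc : VC, C₀ Yc = β (Yc : V) X₀ := fun Yc => rfl
    have hbij : Function.Bijective C₀ := by
      constructor
      · have hker : LinearMap.ker C₀ = ⊥ := by
          rw [eq_bot_iff]
          intro Yc hYc
          rw [LinearMap.mem_ker] at hYc
          rw [hC₀ Yc] at hYc
          have h1 : β X₀ (Yc : V) = 0 := hsym0 _ _ hYc
          have hmem : (Yc : V) ∈ N := by
            rw [← hkerN]
            exact LinearMap.mem_ker.mpr h1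
          have hb : (Yc : V) ∈ NC ⊓ VC := ⟨hmem, Yc.2⟩
          rw [hVCc.inf_eq_bot, Submodule.mem_bot] at hb
          rw [Submodule.mem_bot]
          exact Subtype.ext hb
        exact LinearMap.ker_eq_bot.mp hker
      · intro w
        obtain ⟨Y, hY⟩ := hsurj w
        have hmem : Y ∈ NC ⊔ VC := by
          rw [hVCc.sup_eq_top]
          trivial
        obtain ⟨y, hy, z, hz, rfl⟩ := Submodule.mem_sup.mp hmem
        refine ⟨⟨z, hz⟩, ?_⟩
        rw [hC₀]
        have hyN : β y X₀ = 0 := hsym0 X₀ y ((hmemN y).mp hy X₀)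
        rw [map_add, LinearMap.add_apply, hyN, zero_add] at hY
        exact hY
    set e := LinearEquiv.ofBijective C₀ hbij with he
    set A : V → Module.End ℂ (U × U) :=
      fun X => ((C X).comp VC.subtype).comp e.symm.toLinearMap with hAdef
    have hA : ∀ (X : V) (w : U × U), A X w = β ((e.symm w : VC) : V) X := fun X w => rfl
    have heA : ∀ w : U × U, β ((e.symm w : VC) : V) X₀ = w := by
      intro w
      exact e.apply_symm_apply w
    have hFnd : ∀ w : U × U, (∀ T : V, ⟪w.1, (β T X₀).1⟫ - ⟪w.2, (β T X₀).2⟫ = 0) → w = 0 := by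
      intro w hw
      obtain ⟨T, hT⟩ := hsurj (w.1, -w.2)
      have h := hw T
      rw [hT] at h
      simp only [inner_neg_right] at h
      have h1 : w.1 = 0 := by
        rw [← inner_self_eq_zero (𝕜 := ℝ)]
        have := real_inner_self_nonneg (x := w.1)
        have := real_inner_self_nonneg (x := w.2)
        linarith
      have h2 : w.2 = 0 := by
        rw [← inner_self_eq_zero (𝕜 := ℝ)]
        have := real_inner_self_nonneg (x := w.1)
        have := real_inner_self_nonneg (x := w.2)
        linarith
      exact Prod.ext h1 h2
    have hAcomm : ∀ S1 ∈ Set.range A, ∀ S2 ∈ Set.range A, Commute S1 S2 := by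
      rintro _ ⟨X, rfl⟩ _ ⟨Z, rfl⟩
      apply LinearMap.ext
      intro ξ
      show A X (A Z ξ) = A Z (A X ξ)
      have hY' : β ((e.symm (A Z ξ) : VC) : V) X₀ = β ((e.symm ξ : VC) : V) Z :=
        (heA _).trans (hA Z ξ)
      have hY'' : β ((e.symm (A X ξ) : VC) : V) X₀ = β ((e.symm ξ : VC) : V) X :=
        (heA _).trans (hA X ξ)
      rw [hA X (A Z ξ), hA Z (A X ξ)]
      set Y := ((e.symm ξ : VC) : V)
      set Y' := ((e.symm (A Z ξ) : VC) : V)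
      set Y'' := ((e.symm (A X ξ) : VC) : V)
      have key : ∀ T : V,
          ⟪(β Y' X).1, (β T X₀).1⟫ - ⟪(β Y' X).2, (β T X₀).2⟫
            = ⟪(β Y'' Z).1, (β T X₀).1⟫ - ⟪(β Y'' Z).2, (β T X₀).2⟫ := by
        intro T
        rw [hflat Y' X T X₀, hY', hflat Y Z T X, hflat Y'' Z T X₀, hY'']
      have hsub : β Y' X - β Y'' Z = 0 := by
        apply hFnd
        intro T
        have hd1 : (β Y' X - β Y'' Z).1 = (β Y' X).1 - (β Y'' Z).1 := rfl
        have hd2 : (β Y' X - β Y'' Z).2 = (β Y' X).2 - (β Y'' Z).2 := rfl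
        rw [hd1, hd2, inner_sub_left, inner_sub_left]
        linarith [key T]
      exact sub_eq_zero.mp hsub
    haveI hntW : Nontrivial (U × U) := by
      apply Module.nontrivial_of_finrank_pos (R := ℝ)
      rw [hfinW]
      omega
    obtain ⟨w, hw0, hwe⟩ := commonEigenvector (finrank ℂ (U × U)) (U × U) le_rfl hntW
      (Set.range A) hAcomm
    set Y₁ : V := ((e.symm w : VC) : V) with hY₁
    have hY₁X₀ : β Y₁ X₀ = w := heA w
    have hwX : ∀ X : V, ∃ μ : ℂ, β Y₁ X = μ • w := by
      intro X
      obtain ⟨μ, hμ⟩ := hwe (A X) ⟨X, rfl⟩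
      exact ⟨μ, by rw [← hA X w]; exact hμ⟩
    have hY₁N : Y₁ ∉ N := by
      intro hmem
      apply hw0
      rw [← hY₁X₀]
      exact hsym0 _ _ ((hmemN Y₁).mp hmem X₀)
    set u : U := (β Y₁ Y₁).1 with hu
    have hu0 : u ≠ 0 := fun h => hY₁N ((hmemN' Y₁).mpr h)
    obtain ⟨μ₁, hμ₁⟩ := hwX Y₁
    have hbYY : β Y₁ Y₁ = (u, 0) := Prod.ext rfl (hq2 Y₁)
    have hμ₁0 : μ₁ ≠ 0 := by
      intro h
      rw [h, zero_smul, hbYY] at hμ₁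
      exact hu0 (congrArg Prod.fst hμ₁)
    have hwv : w = μ₁⁻¹ • ((u, 0) : U × U) := by
      rw [← hbYY, hμ₁, smul_smul, inv_mul_cancel₀ hμ₁0, one_smul]
    have hzsmul : ∀ (z : ℂ), z • ((u, 0) : U × U) = (z.re • u, z.im • u) := by
      intro z
      show z.re • ((u, 0) : U × U) + z.im • JW ((u, 0) : U × U) = _
      rw [hJWapp]
      ext <;> simp
    have hrank1 : ∀ X : V, ∃ a b : ℝ, β Y₁ X = (a • u, b • u) := by
      intro X
      obtain ⟨μ, hμ⟩ := hwX X
      refine ⟨(μ * μ₁⁻¹).re, (μ * μ₁⁻¹).im, ?_⟩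
      rw [hμ, hwv, smul_smul, hzsmul]
    -- normalization
    have hnu0 : ‖u‖ ≠ 0 := norm_ne_zero_iff.mpr hu0
    set t : ℝ := (Real.sqrt ‖u‖)⁻¹ with ht
    have ht2 : t * t = ‖u‖⁻¹ := by
      rw [ht, ← mul_inv]
      rw [Real.mul_self_sqrt (norm_nonneg u)]
    set u₁ : U := ‖u‖⁻¹ • u with hu₁def
    have huu₁ : u = ‖u‖ • u₁ := by
      rw [hu₁def, smul_smul, mul_inv_cancel₀ hnu0, one_smul]
    have hu₁0 : u₁ ≠ 0 := by
      rw [hu₁def]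
      exact smul_ne_zero (inv_ne_zero hnu0) hu0
    have hinner_u₁ : ⟪u₁, u₁⟫ = 1 := by
      rw [hu₁def, real_inner_smul_left, real_inner_smul_right,
        real_inner_self_eq_norm_mul_norm]
      field_simp
    set X₁ : V := t • Y₁ with hX₁
    have hqX₁ : β X₁ X₁ = (u₁, 0) := by
      have h1 : β X₁ X₁ = (t * t) • β Y₁ Y₁ := by
        rw [hX₁, map_smul β t Y₁, LinearMap.smul_apply, (β Y₁).map_smul t Y₁, smul_smul]
      rw [h1, hbYY, ht2, hu₁def]
      refine Prod.ext ?_ ?_ <;> simp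
    have hr2 : ∀ Z : V, ∃ a b : ℝ, β X₁ Z = (a • u₁, b • u₁) := by
      intro Z
      obtain ⟨a, b, hab⟩ := hrank1 Z
      refine ⟨t * (a * ‖u‖), t * (b * ‖u‖), ?_⟩
      have h1 : β X₁ Z = t • β Y₁ Z := by
        rw [hX₁, map_smul β t Y₁, LinearMap.smul_apply]
      have hs : ∀ x : ℝ, t * (x * ‖u‖) * ‖u‖⁻¹ = t * x := by
        intro x
        rw [mul_assoc t, mul_assoc x, mul_inv_cancel₀ hnu0, mul_one]
      rw [h1, hab]
      refine Prod.ext ?_ ?_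
      · show t • (a • u) = (t * (a * ‖u‖)) • u₁
        rw [hu₁def, smul_smul, smul_smul, hs a]
      · show t • (b • u) = (t * (b * ‖u‖)) • u₁
        rw [hu₁def, smul_smul, smul_smul, hs b]
    set V₁ : Submodule ℝ V := LinearMap.ker (β X₁) with hV₁
    have hmemV₁ : ∀ Z : V, Z ∈ V₁ ↔ β X₁ Z = 0 := fun Z => LinearMap.mem_ker
    have hNleV₁ : N ≤ V₁ := fun Y hY => LinearMap.mem_ker.mpr ((hmemN Y).mp hY X₁)
    have hJV₁ : ∀ Z ∈ V₁, J Z ∈ V₁ := by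
      intro Z hZ
      rw [hmemV₁] at hZ ⊢
      rw [hlin2 X₁ Z, hZ]
      simp
    have hbX₁JX₁ : β X₁ (J X₁) = (0, -u₁) := by
      rw [hlin2 X₁ X₁, hqX₁]
    have hdecomp : ∀ Z : V, ∃ (z : V) (a b : ℝ), z ∈ V₁ ∧ Z = z + a • X₁ + b • J X₁ := by
      intro Z
      obtain ⟨a, b, hab⟩ := hr2 Z
      refine ⟨Z - a • X₁ + b • J X₁, a, -b, ?_, by module⟩
      rw [hmemV₁, map_add (β X₁) (Z - a • X₁) (b • J X₁), map_sub (β X₁) Z (a • X₁),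
        LinearMap.map_smul (β X₁) a X₁, LinearMap.map_smul (β X₁) b (J X₁),
        hab, hqX₁, hbX₁JX₁]
      refine Prod.ext ?_ ?_ <;> simp
    have hdiag : ∀ T ∈ V₁, ⟪u₁, (β T T).1⟫ = 0 := by
      intro T hT
      have h := hLA X₁ T
      rw [(hmemV₁ T).mp hT, hqX₁] at h
      simp only [Prod.fst_zero, Prod.snd_zero, inner_zero_left] at h
      linarith [h]
    have horth1 : ∀ Y Z : V, Y ∈ V₁ → Z ∈ V₁ → ⟪u₁, (β Y Z).1⟫ = 0 := by
      intro Y Z hY hZ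
      have hsum := hdiag (Y + Z) (V₁.add_mem hY hZ)
      have hYY := hdiag Y hY
      have hZZ := hdiag Z hZ
      have hexp : β (Y + Z) (Y + Z) = β Y Y + β Y Z + (β Z Y + β Z Z) := by
        rw [map_add, map_add β Y Z, LinearMap.add_apply, LinearMap.add_apply]
        abel
      have hfst : (β (Y + Z) (Y + Z)).1
          = (β Y Y).1 + (β Y Z).1 + ((β Z Y).1 + (β Z Z).1) := by
        rw [hexp]; rfl
      have hZY : (β Z Y).1 = (β Y Z).1 := by rw [hsym Y Z]
      rw [hfst, hZY] at hsum
      simp only [inner_add_right] at hsum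
      linarith
    have horth2 : ∀ Y Z : V, Y ∈ V₁ → Z ∈ V₁ → ⟪u₁, (β Y Z).2⟫ = 0 := by
      intro Y Z hY hZ
      have h := horth1 Y (J Z) hY (hJV₁ Z hZ)
      rw [hlin2 Y Z] at h
      exact h
    set U' : Submodule ℝ U := (ℝ ∙ u₁)ᗮ with hU'def
    have hmemU' : ∀ x : U, x ∈ U' ↔ ⟪u₁, x⟫ = 0 := fun x =>
      Submodule.mem_orthogonal_singleton_iff_inner_right
    set J₁ : ↥V₁ →ₗ[ℝ] ↥V₁ := J.restrict hJV₁ with hJ₁def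
    have hJ₁app : ∀ Z : ↥V₁, (J₁ Z : V) = J (Z : V) := fun Z => rfl
    have hJ₁2 : ∀ v : ↥V₁, J₁ (J₁ v) = -v := by
      intro v
      apply Subtype.ext
      rw [hJ₁app, hJ₁app, hJ v]
      rfl
    set β' : ↥V₁ →ₗ[ℝ] ↥V₁ →ₗ[ℝ] (↥U' × ↥U') := LinearMap.mk₂ ℝ
      (fun Y Z => (⟨(β (Y : V) (Z : V)).1, (hmemU' _).mpr (horth1 _ _ Y.2 Z.2)⟩,
                   ⟨(β (Y : V) (Z : V)).2, (hmemU' _).mpr (horth2 _ _ Y.2 Z.2)⟩))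
      (by
        intro m₁ m₂ Z
        have hc : β ((m₁ + m₂ : ↥V₁) : V) (Z : V)
            = β (m₁ : V) (Z : V) + β (m₂ : V) (Z : V) := by
          rw [show ((m₁ + m₂ : ↥V₁) : V) = (m₁ : V) + (m₂ : V) from rfl, map_add,
            LinearMap.add_apply]
        refine Prod.ext (Subtype.ext ?_) (Subtype.ext ?_) <;> simp [hc])
      (by
        intro c m Z
        have hc : β ((c • m : ↥V₁) : V) (Z : V) = c • β (m : V) (Z : V) := by
          rw [show ((c • m : ↥V₁) : V) = c • (m : V) from rfl, map_smul,
            LinearMap.smul_apply]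
        refine Prod.ext (Subtype.ext ?_) (Subtype.ext ?_) <;> simp [hc])
      (by
        intro Y m₁ m₂
        have hc : β (Y : V) ((m₁ + m₂ : ↥V₁) : V)
            = β (Y : V) (m₁ : V) + β (Y : V) (m₂ : V) := by
          rw [show ((m₁ + m₂ : ↥V₁) : V) = (m₁ : V) + (m₂ : V) from rfl, map_add]
        refine Prod.ext (Subtype.ext ?_) (Subtype.ext ?_) <;> simp [hc])
      (by
        intro c Y m
        have hc : β (Y : V) ((c • m : ↥V₁) : V) = c • β (Y : V) (m : V) := by
          rw [show ((c • m : ↥V₁) : V) = c • (m : V) from rfl, map_smul]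
        refine Prod.ext (Subtype.ext ?_) (Subtype.ext ?_) <;> simp [hc])
      with hβ'def
    have hβ'1 : ∀ Y Z : ↥V₁, ((β' Y Z).1 : U) = (β (Y : V) (Z : V)).1 := fun Y Z => rfl
    have hβ'2 : ∀ Y Z : ↥V₁, ((β' Y Z).2 : U) = (β (Y : V) (Z : V)).2 := fun Y Z => rfl
    have hβ'zero : ∀ Y Z : ↥V₁, β' Y Z = 0 ↔ β (Y : V) (Z : V) = 0 := by
      intro Y Z
      constructor
      · intro h
        refine Prod.ext ?_ ?_
        · rw [← hβ'1, h]; rfl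
        · rw [← hβ'2, h]; rfl
      · intro h
        refine Prod.ext (Subtype.ext ?_) (Subtype.ext ?_)
        · rw [hβ'1, h]; rfl
        · rw [hβ'2, h]; rfl
    -- hypotheses for the induction
    have hsym' : ∀ X Y : ↥V₁, β' Y X = ((β' X Y).1, -(β' X Y).2) := by
      intro X Y
      refine Prod.ext (Subtype.ext ?_) (Subtype.ext ?_)
      · show (β (Y : V) (X : V)).1 = (β (X : V) (Y : V)).1
        rw [hsym (X : V) (Y : V)]
      · show (β (Y : V) (X : V)).2 = -(β (X : V) (Y : V)).2
        rw [hsym (X : V) (Y : V)]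
    have hlin' : ∀ X Y : ↥V₁, β' (J₁ X) Y = (-(β' X Y).2, (β' X Y).1) := by
      intro X Y
      refine Prod.ext (Subtype.ext ?_) (Subtype.ext ?_)
      · show (β (J (X : V)) (Y : V)).1 = -(β (X : V) (Y : V)).2
        rw [hlin (X : V) (Y : V)]
      · show (β (J (X : V)) (Y : V)).2 = (β (X : V) (Y : V)).1
        rw [hlin (X : V) (Y : V)]
    have hflat' : ∀ X Y Z T : ↥V₁,
        ⟪(β' X Y).1, (β' Z T).1⟫ - ⟪(β' X Y).2, (β' Z T).2⟫ =
          ⟪(β' X T).1, (β' Z Y).1⟫ - ⟪(β' X T).2, (β' Z Y).2⟫ := by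
      intro X Y Z T
      rw [Submodule.coe_inner, Submodule.coe_inner, Submodule.coe_inner, Submodule.coe_inner]
      rw [hβ'1, hβ'1, hβ'1, hβ'1, hβ'2, hβ'2, hβ'2, hβ'2]
      exact hflat (X : V) (Y : V) (Z : V) (T : V)
    -- dimensions
    have hrangeX₁ : LinearMap.range (β X₁)
        = Submodule.span ℝ {((u₁, 0) : U × U), ((0 : U), u₁)} := by
      apply le_antisymm
      · rintro _ ⟨Z, rfl⟩
        obtain ⟨a, b, hab⟩ := hr2 Z
        rw [hab]
        rw [Submodule.mem_span_pair]
        exact ⟨a, b, by refine Prod.ext ?_ ?_ <;> simp⟩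
      · rw [Submodule.span_le]
        rintro w hw
        rcases hw with h | h
        · rw [h]
          exact ⟨X₁, hqX₁⟩
        · rw [Set.mem_singleton_iff] at h
          rw [h, show ((0 : U), u₁) = -((0 : U), -u₁) by ext <;> simp]
          exact Submodule.neg_mem _ ⟨J X₁, hbX₁JX₁⟩
    have hpair_li : LinearIndependent ℝ ![((u₁, 0) : U × U), ((0 : U), u₁)] := by
      rw [LinearIndependent.pair_iff]
      intro a b hab
      have h1 : a • u₁ = 0 := by
        have := congrArg Prod.fst hab
        simpa using this
      have h2 : b • u₁ = 0 := by
        have := congrArg Prod.snd hab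
        simpa using this
      constructor
      · rcases smul_eq_zero.mp h1 with h | h
        · exact h
        · exact absurd h hu₁0
      · rcases smul_eq_zero.mp h2 with h | h
        · exact h
        · exact absurd h hu₁0
    have hrange_fr : finrank ℝ ↥(LinearMap.range (β X₁)) = 2 := by
      rw [hrangeX₁]
      have hrr : Set.range ![((u₁, 0) : U × U), ((0 : U), u₁)]
          = {((u₁, 0) : U × U), ((0 : U), u₁)} := by
        ext x
        simp [Fin.exists_fin_two]
        tauto
      rw [← hrr, finrank_span_eq_card hpair_li]
      simp
    have hfV₁ : finrank ℝ ↥V₁ = 2 * m := by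
      have h := LinearMap.finrank_range_add_finrank_ker (β X₁)
      rw [hV, hrange_fr] at h
      rw [hV₁]
      omega
    have hU'rank : finrank ℝ ↥U' = p := by
      have h := Submodule.finrank_add_finrank_orthogonal (K := (ℝ ∙ u₁))
      rw [finrank_span_singleton hu₁0, hU] at h
      rw [hU'def]
      omega
    -- nullity
    have hNV₁ : ∀ Y : ↥V₁, ((Y : V) ∈ N) ↔ (∀ Z : ↥V₁, β' Z Y = 0) := by
      intro Y
      constructor
      · intro h Z
        exact (hβ'zero Z Y).mpr ((hmemN (Y : V)).mp h (Z : V))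
      · intro h
        rw [hmemN]
        intro X
        obtain ⟨z, a, b, hz, hX⟩ := hdecomp X
        have h1 : β z (Y : V) = 0 := (hβ'zero ⟨z, hz⟩ Y).mp (h ⟨z, hz⟩)
        have h2 : β X₁ (Y : V) = 0 := (hmemV₁ _).mp Y.2
        have h3 : β (J X₁) (Y : V) = 0 := by
          rw [hlin X₁ (Y : V), h2]
          simp
        rw [hX, map_add β (z + a • X₁) (b • J X₁), map_add β z (a • X₁),
          LinearMap.add_apply, LinearMap.add_apply, map_smul β a X₁, map_smul β b (J X₁),
          LinearMap.smul_apply, LinearMap.smul_apply, h1, h2, h3]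
        simp
    have hN₁ : (⨅ Z : ↥V₁, LinearMap.ker (β' Z)) = N.comap V₁.subtype := by
      ext Y
      rw [Submodule.mem_iInf, Submodule.mem_comap]
      constructor
      · intro h
        exact (hNV₁ Y).mpr fun Z => LinearMap.mem_ker.mp (h Z)
      · intro h Z
        exact LinearMap.mem_ker.mpr ((hNV₁ Y).mp h Z)
    have hnul' : finrank ℝ ↥(⨅ Z : ↥V₁, LinearMap.ker (β' Z)) = 2 * (m - p) := by
      rw [hN₁, (Submodule.comapSubtypeEquivOfLe hNleV₁).finrank_eq, hnul]
      omega
    obtain ⟨X', hind', hspan', hNspan', hoff', c', hcl', hcr', hcli', hcspan', hcorth', hcnorm'⟩ :=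
      ih m (by omega) ↥V₁ ↥U' hfV₁ hU'rank J₁ hJ₁2 β' hsym' hlin' hflat' hnul'
    -- assemble
    set X : Fin (m + 1) → V := Fin.cons X₁ (fun i => ((X' i : V))) with hXdef
    have hX0 : X 0 = X₁ := rfl
    have hXs : ∀ i : Fin m, X i.succ = (X' i : V) := fun i => rfl
    have hsetEq : V₁.subtype '' (Set.range (Sum.elim X' (fun i => J₁ (X' i))))
        = Set.range (Sum.elim (fun i : Fin m => ((X' i : V)))
            (fun i : Fin m => J ((X' i : V)))) := by
      ext v
      constructor
      · rintro ⟨w, ⟨a, rfl⟩, rfl⟩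
        rcases a with i | i
        · exact ⟨Sum.inl i, rfl⟩
        · exact ⟨Sum.inr i, rfl⟩
      · rintro ⟨a, rfl⟩
        rcases a with i | i
        · exact ⟨Sum.elim X' (fun i => J₁ (X' i)) (Sum.inl i), ⟨Sum.inl i, rfl⟩, rfl⟩
        · exact ⟨Sum.elim X' (fun i => J₁ (X' i)) (Sum.inr i), ⟨Sum.inr i, rfl⟩, rfl⟩
    have hV₁span : Submodule.span ℝ (Set.range (Sum.elim (fun i : Fin m => ((X' i : V)))
        (fun i : Fin m => J ((X' i : V))))) = V₁ := by
      rw [← hsetEq, ← Submodule.map_span, hspan', Submodule.map_top, Submodule.range_subtype]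
    have hbigspan : Submodule.span ℝ
        (Set.range (Sum.elim X (fun i : Fin (m+1) => J (X i)))) = ⊤ := by
      rw [eq_top_iff]
      intro Z _
      obtain ⟨z, a, b, hz, rfl⟩ := hdecomp Z
      have hXmem : X₁ ∈ Submodule.span ℝ
          (Set.range (Sum.elim X (fun i : Fin (m+1) => J (X i)))) :=
        Submodule.subset_span ⟨Sum.inl 0, rfl⟩
      have hJXmem : J X₁ ∈ Submodule.span ℝ
          (Set.range (Sum.elim X (fun i : Fin (m+1) => J (X i)))) :=
        Submodule.subset_span ⟨Sum.inr 0, rfl⟩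
      have hzmem : z ∈ Submodule.span ℝ
          (Set.range (Sum.elim X (fun i : Fin (m+1) => J (X i)))) := by
        have h1 : z ∈ V₁ := hz
        rw [← hV₁span] at h1
        refine Submodule.span_mono ?_ h1
        rintro v ⟨a', rfl⟩
        rcases a' with i | i
        · exact ⟨Sum.inl i.succ, rfl⟩
        · exact ⟨Sum.inr i.succ, rfl⟩
      exact Submodule.add_mem _ (Submodule.add_mem _ hzmem
        (Submodule.smul_mem _ _ hXmem)) (Submodule.smul_mem _ _ hJXmem)
    have hcard2 : Fintype.card (Fin (m+1) ⊕ Fin (m+1)) = finrank ℝ V := by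
      simp [hV]
      omega
    have hbigind : LinearIndependent ℝ (Sum.elim X (fun i : Fin (m+1) => J (X i))) :=
      linearIndependent_of_top_le_span_of_card_eq_finrank hbigspan.ge hcard2
    refine ⟨X, hbigind, hbigspan, ?_, ?_, ?_⟩
    · -- (i)
      have hsetcoe : (V₁.subtype ''
            {v : ↥V₁ | ∃ j : Fin m, p ≤ (j : ℕ) ∧ (v = X' j ∨ v = J₁ (X' j))})
          = {v : V | ∃ j : Fin (m+1), p + 1 ≤ (j : ℕ) ∧ (v = X j ∨ v = J (X j))} := by
        ext v
        constructor
        · rintro ⟨w, ⟨j, hj, hw⟩, rfl⟩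
          refine ⟨j.succ, by simp [Fin.val_succ]; omega, ?_⟩
          rcases hw with h | h
          · left; rw [h]; rfl
          · right; rw [h]; rfl
        · rintro ⟨j, hj, hv⟩
          have hj0 : j ≠ 0 := by
            intro h
            rw [h] at hj
            simp at hj
          obtain ⟨i, rfl⟩ := Fin.exists_succ_eq.mpr hj0
          have hji : p ≤ (i : ℕ) := by
            have : ((i.succ : Fin (m+1)) : ℕ) = (i : ℕ) + 1 := Fin.val_succ i
            omega
          rcases hv with h | h
          · exact ⟨X' i, ⟨i, hji, Or.inl rfl⟩, by rw [h]; rfl⟩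
          · exact ⟨J₁ (X' i), ⟨i, hji, Or.inr rfl⟩, by rw [h]; rfl⟩
      rw [← hsetcoe, ← Submodule.map_span, ← hNspan', hN₁, Submodule.map_comap_subtype]
      exact (inf_of_le_right hNleV₁).symm
    · -- (ii)
      intro i j hij Yi hYi Yj hYj
      have hspanV₁ : ∀ k : Fin m,
          (Submodule.span ℝ {X k.succ, J (X k.succ)} : Submodule ℝ V) ≤ V₁ := by
        intro k
        rw [Submodule.span_le]
        rintro v hv
        rcases hv with h | h
        · rw [h, hXs k]
          exact (X' k).2
        · rw [Set.mem_singleton_iff] at h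
          rw [h, hXs k]
          exact hJV₁ _ (X' k).2
      have hker0 : ∀ (Yj' : V), Yj' ∈ V₁ →
          ∀ Yi' ∈ Submodule.span ℝ {X₁, J X₁}, β Yi' Yj' = 0 := by
        intro Yj' hYj' Yi' hYi'
        obtain ⟨a, b, rfl⟩ := Submodule.mem_span_pair.mp hYi'
        have h1 : β X₁ Yj' = 0 := (hmemV₁ _).mp hYj'
        have h2 : β (J X₁) Yj' = 0 := by
          rw [hlin X₁ Yj', h1]
          simp
        rw [map_add, LinearMap.add_apply, map_smul β a X₁, map_smul β b (J X₁),
          LinearMap.smul_apply, LinearMap.smul_apply, h1, h2]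
        simp
      rcases Fin.eq_zero_or_eq_succ i with rfl | ⟨i', rfl⟩
      · rcases Fin.eq_zero_or_eq_succ j with rfl | ⟨j', rfl⟩
        · exact absurd rfl hij
        · exact hker0 Yj (hspanV₁ j' hYj) Yi hYi
      · rcases Fin.eq_zero_or_eq_succ j with rfl | ⟨j', rfl⟩
        · exact hsym0 _ _ (hker0 Yi (hspanV₁ i' hYi) Yj hYj)
        · have hij' : i' ≠ j' := fun h => hij (by rw [h])
          rw [hXs i'] at hYi
          rw [hXs j'] at hYj
          obtain ⟨a, b, hYi'⟩ := Submodule.mem_span_pair.mp hYi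
          obtain ⟨cs, d, hYj'⟩ := Submodule.mem_span_pair.mp hYj
          have hcoei : ((a • X' i' + b • J₁ (X' i') : ↥V₁) : V) = Yi := by
            rw [← hYi']
            rfl
          have hcoej : ((cs • X' j' + d • J₁ (X' j') : ↥V₁) : V) = Yj := by
            rw [← hYj']
            rfl
          have h0 : β' (a • X' i' + b • J₁ (X' i')) (cs • X' j' + d • J₁ (X' j')) = 0 :=
            hoff' i' j' hij' _ (Submodule.mem_span_pair.mpr ⟨a, b, rfl⟩)
              _ (Submodule.mem_span_pair.mpr ⟨cs, d, rfl⟩)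
          rw [← hcoei, ← hcoej]
          exact (hβ'zero _ _).mp h0
    · -- (iii)
      have hple : p ≤ m := by omega
      set cc : ↥U' × ↥U' → U × U := fun w => ((w.1 : U), (w.2 : U)) with hccdef
      have hccβ : ∀ Y Z : ↥V₁, cc (β' Y Z) = β (Y : V) (Z : V) :=
        fun Y Z => Prod.ext (hβ'1 Y Z) (hβ'2 Y Z)
      have hcc1 : ∀ w : ↥U' × ↥U', ⟪u₁, (cc w).1⟫ = 0 := fun w => (hmemU' _).mp w.1.2
      have hcc2 : ∀ w : ↥U' × ↥U', ⟪u₁, (cc w).2⟫ = 0 := fun w => (hmemU' _).mp w.2.2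
      have hFcc : ∀ w w' : ↥U' × ↥U',
          ⟪(cc w).1, (cc w').1⟫ - ⟪(cc w).2, (cc w').2⟫
            = ⟪w.1, w'.1⟫ - ⟪w.2, w'.2⟫ := by
        intro w w'
        rw [Submodule.coe_inner, Submodule.coe_inner]
      set c : Fin (p+1) ⊕ Fin (p+1) → U × U := Sum.elim
        (fun j => β (X (Fin.castLE hpn j)) (X (Fin.castLE hpn j)))
        (fun j => β (X (Fin.castLE hpn j)) (J (X (Fin.castLE hpn j)))) with hcdef
      have hcastsucc : ∀ k : Fin p, Fin.castLE hpn k.succ = (Fin.castLE hple k).succ := by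
        intro k
        apply Fin.ext
        simp
      have hval_l0 : c (Sum.inl 0) = (u₁, 0) := hqX₁
      have hval_r0 : c (Sum.inr 0) = ((0 : U), -u₁) := hbX₁JX₁
      have hval_ls : ∀ k : Fin p, c (Sum.inl k.succ) = cc (c' (Sum.inl k)) := by
        intro k
        have h1 : c (Sum.inl k.succ)
            = β ((X' (Fin.castLE hple k)) : V) ((X' (Fin.castLE hple k)) : V) := by
          show β (X (Fin.castLE hpn k.succ)) (X (Fin.castLE hpn k.succ)) = _
          rw [hcastsucc k, hXs]
        rw [h1, hcl' k, hccβ]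
      have hval_rs : ∀ k : Fin p, c (Sum.inr k.succ) = cc (c' (Sum.inr k)) := by
        intro k
        have h1 : c (Sum.inr k.succ)
            = β ((X' (Fin.castLE hple k)) : V) (J ((X' (Fin.castLE hple k)) : V)) := by
          show β (X (Fin.castLE hpn k.succ)) (J (X (Fin.castLE hpn k.succ))) = _
          rw [hcastsucc k, hXs]
        rw [h1, hcr' k, hccβ]
        rfl
      have hmix1' : ∀ w : ↥U' × ↥U',
          ⟪((u₁, (0:U)) : U × U).1, (cc w).1⟫ - ⟪((u₁, (0:U)) : U × U).2, (cc w).2⟫ = 0 := by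
        intro w
        show ⟪u₁, (cc w).1⟫ - ⟪(0 : U), (cc w).2⟫ = 0
        rw [hcc1, inner_zero_left, sub_zero]
      have hmix1 : ∀ w : ↥U' × ↥U',
          ⟪(cc w).1, ((u₁, (0:U)) : U × U).1⟫ - ⟪(cc w).2, ((u₁, (0:U)) : U × U).2⟫ = 0 := by
        intro w
        show ⟪(cc w).1, u₁⟫ - ⟪(cc w).2, (0 : U)⟫ = 0
        rw [real_inner_comm, hcc1, inner_zero_right, sub_zero]
      have hmix2' : ∀ w : ↥U' × ↥U',
          ⟪(((0:U), -u₁) : U × U).1, (cc w).1⟫ - ⟪(((0:U), -u₁) : U × U).2, (cc w).2⟫ = 0 := by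
        intro w
        show ⟪(0 : U), (cc w).1⟫ - ⟪-u₁, (cc w).2⟫ = 0
        rw [inner_zero_left, inner_neg_left, hcc2]
        ring
      have hmix2 : ∀ w : ↥U' × ↥U',
          ⟪(cc w).1, (((0:U), -u₁) : U × U).1⟫ - ⟪(cc w).2, (((0:U), -u₁) : U × U).2⟫ = 0 := by
        intro w
        show ⟪(cc w).1, (0 : U)⟫ - ⟪(cc w).2, -u₁⟫ = 0
        rw [inner_zero_right, inner_neg_right, real_inner_comm, hcc2]
        ring
      have hcorth : ∀ a b : Fin (p+1) ⊕ Fin (p+1), a ≠ b →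
          ⟪(c a).1, (c b).1⟫ - ⟪(c a).2, (c b).2⟫ = 0 := by
        intro a b hab
        rcases a with a | a <;> rcases b with b | b
        · rcases Fin.eq_zero_or_eq_succ a with rfl | ⟨k, rfl⟩ <;>
            rcases Fin.eq_zero_or_eq_succ b with rfl | ⟨l, rfl⟩
          · exact absurd rfl hab
          · rw [hval_l0, hval_ls l]
            exact hmix1' _
          · rw [hval_ls k, hval_l0]
            exact hmix1 _
          · rw [hval_ls k, hval_ls l, hFcc]
            refine hcorth' _ _ ?_
            intro h
            apply hab
            rw [Sum.inl.injEq] at h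
            rw [h]
        · rcases Fin.eq_zero_or_eq_succ a with rfl | ⟨k, rfl⟩ <;>
            rcases Fin.eq_zero_or_eq_succ b with rfl | ⟨l, rfl⟩
          · rw [hval_l0, hval_r0]
            show ⟪u₁, (0 : U)⟫ - ⟪(0 : U), -u₁⟫ = 0
            rw [inner_zero_right, inner_zero_left]
            ring
          · rw [hval_l0, hval_rs l]
            exact hmix1' _
          · rw [hval_ls k, hval_r0]
            exact hmix2 _
          · rw [hval_ls k, hval_rs l, hFcc]
            exact hcorth' _ _ (by simp)
        · rcases Fin.eq_zero_or_eq_succ a with rfl | ⟨k, rfl⟩ <;>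
            rcases Fin.eq_zero_or_eq_succ b with rfl | ⟨l, rfl⟩
          · rw [hval_r0, hval_l0]
            show ⟪(0 : U), u₁⟫ - ⟪-u₁, (0 : U)⟫ = 0
            rw [inner_zero_left, inner_zero_right]
            ring
          · rw [hval_r0, hval_ls l]
            exact hmix2' _
          · rw [hval_rs k, hval_l0]
            exact hmix1 _
          · rw [hval_rs k, hval_ls l, hFcc]
            exact hcorth' _ _ (by simp)
        · rcases Fin.eq_zero_or_eq_succ a with rfl | ⟨k, rfl⟩ <;>
            rcases Fin.eq_zero_or_eq_succ b with rfl | ⟨l, rfl⟩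
          · exact absurd rfl hab
          · rw [hval_r0, hval_rs l]
            exact hmix2' _
          · rw [hval_rs k, hval_r0]
            exact hmix2 _
          · rw [hval_rs k, hval_rs l, hFcc]
            refine hcorth' _ _ ?_
            intro h
            apply hab
            rw [Sum.inr.injEq] at h
            rw [h]
      have hcnorm : ∀ a : Fin (p+1) ⊕ Fin (p+1),
          ⟪(c a).1, (c a).1⟫ - ⟪(c a).2, (c a).2⟫ = 1 ∨
          ⟪(c a).1, (c a).1⟫ - ⟪(c a).2, (c a).2⟫ = -1 := by
        intro a
        rcases a with a | a <;> rcases Fin.eq_zero_or_eq_succ a with rfl | ⟨k, rfl⟩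
        · left
          rw [hval_l0]
          show ⟪u₁, u₁⟫ - ⟪(0 : U), (0 : U)⟫ = 1
          rw [hinner_u₁, inner_zero_left]
          ring
        · rw [hval_ls k, hFcc]
          exact hcnorm' (Sum.inl k)
        · right
          rw [hval_r0]
          show ⟪(0 : U), (0 : U)⟫ - ⟪-u₁, -u₁⟫ = -1
          rw [inner_zero_left, inner_neg_neg, hinner_u₁]
          ring
        · rw [hval_rs k, hFcc]
          exact hcnorm' (Sum.inr k)
      have hcindep : LinearIndependent ℝ c := by
        rw [Fintype.linearIndependent_iff]
        intro g hg b
        set Lb : (U × U) →ₗ[ℝ] ℝ :=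
          { toFun := fun w => ⟪w.1, (c b).1⟫ - ⟪w.2, (c b).2⟫
            map_add' := by
              intro x y
              show ⟪(x + y).1, (c b).1⟫ - ⟪(x + y).2, (c b).2⟫ = _
              rw [show (x + y).1 = x.1 + y.1 from rfl, show (x + y).2 = x.2 + y.2 from rfl,
                inner_add_left, inner_add_left]
              ring
            map_smul' := by
              intro r x
              show ⟪(r • x).1, (c b).1⟫ - ⟪(r • x).2, (c b).2⟫ = _
              rw [show (r • x).1 = r • x.1 from rfl, show (r • x).2 = r • x.2 from rfl,
                real_inner_smul_left, real_inner_smul_left]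
              show _ = r * _
              ring } with hLbdef
        have h0 : Lb (∑ i, g i • c i) = 0 := by
          rw [hg, map_zero]
        rw [map_sum] at h0
        have hterm : ∀ a : Fin (p+1) ⊕ Fin (p+1),
            Lb (g a • c a) = g a * (⟪(c a).1, (c b).1⟫ - ⟪(c a).2, (c b).2⟫) := by
          intro a
          show ⟪(g a • c a).1, (c b).1⟫ - ⟪(g a • c a).2, (c b).2⟫ = _
          rw [show (g a • c a).1 = g a • (c a).1 from rfl,
            show (g a • c a).2 = g a • (c a).2 from rfl,
            real_inner_smul_left, real_inner_smul_left]
          ring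
        rw [Finset.sum_congr rfl (fun a _ => hterm a)] at h0
        rw [Finset.sum_eq_single b _ (fun hb => absurd (Finset.mem_univ b) hb)] at h0
        · rcases hcnorm b with h | h
          · rw [h, mul_one] at h0
            exact h0
          · rw [h] at h0
            linarith
        · intro a _ hab
          rw [hcorth a b hab, mul_zero]
      have hcardc : Fintype.card (Fin (p+1) ⊕ Fin (p+1)) = finrank ℝ (U × U) := by
        simp [hfinW]
        omega
      have hcspan : Submodule.span ℝ (Set.range c) = ⊤ :=
        hcindep.span_eq_top_of_card_eq_finrank hcardc
      exact ⟨c, fun j => rfl, fun j => rfl, hcindep, hcspan, hcorth, hcnorm⟩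


/-- Diagonalization of a flat `β` with `ν(β) = 2(n-p)`: there is a basis
`X₁, JX₁, …, X_n, JX_n` of `V` such that (i) `N(β)` is spanned by the
`X_j, JX_j` with `p+1 ≤ j ≤ n`; (ii) `β(Y_i,Y_j) = 0` for `i ≠ j` whenever
`Y_k ∈ span{X_k, JX_k}`; (iii) the vectors `β(X_j,X_j), β(X_j,JX_j)`,
`1 ≤ j ≤ p`, form an orthonormal basis of `W = U × U` for the
signature-(p,p) form. -/
theorem stmt_13
    {V U : Type*} [AddCommGroup V] [Module ℝ V] [FiniteDimensional ℝ V]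
    [NormedAddCommGroup U] [InnerProductSpace ℝ U] [FiniteDimensional ℝ U]
    (n p : ℕ) (hpn : p ≤ n) (hV : finrank ℝ V = 2 * n) (hU : finrank ℝ U = p)
    (J : V →ₗ[ℝ] V) (hJ : ∀ v : V, J (J v) = -v)
    (α : V →ₗ[ℝ] V →ₗ[ℝ] U) (hα : ∀ X Y : V, α X Y = α Y X)
    (β : V →ₗ[ℝ] V →ₗ[ℝ] (U × U))
    (hβ : ∀ X Y : V, β X Y = (α X Y + α (J X) (J Y), α X (J Y) - α (J X) Y))
    (hflat : ∀ X Y Z T : V,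
      ⟪(β X Y).1, (β Z T).1⟫ - ⟪(β X Y).2, (β Z T).2⟫ =
        ⟪(β X T).1, (β Z Y).1⟫ - ⟪(β X T).2, (β Z Y).2⟫)
    (hnul : finrank ℝ ↥(⨅ X : V, LinearMap.ker (β X)) = 2 * (n - p)) :
    ∃ X : Fin n → V,
      -- `X₁, JX₁, …, X_n, JX_n` is a basis of `V`
      LinearIndependent ℝ (Sum.elim X (fun i : Fin n => J (X i))) ∧
      Submodule.span ℝ (Set.range (Sum.elim X (fun i : Fin n => J (X i)))) = ⊤ ∧
      -- (i)
      (⨅ Z : V, LinearMap.ker (β Z)) =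
        Submodule.span ℝ
          {v : V | ∃ j : Fin n, p ≤ (j : ℕ) ∧ (v = X j ∨ v = J (X j))} ∧
      -- (ii)
      (∀ i j : Fin n, i ≠ j →
        ∀ Yi ∈ Submodule.span ℝ {X i, J (X i)},
          ∀ Yj ∈ Submodule.span ℝ {X j, J (X j)}, β Yi Yj = 0) ∧
      -- (iii)
      (∃ c : Fin p ⊕ Fin p → U × U,
        (∀ j : Fin p,
          c (Sum.inl j) = β (X (Fin.castLE hpn j)) (X (Fin.castLE hpn j))) ∧
        (∀ j : Fin p,
          c (Sum.inr j) = β (X (Fin.castLE hpn j)) (J (X (Fin.castLE hpn j)))) ∧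
        LinearIndependent ℝ c ∧
        Submodule.span ℝ (Set.range c) = ⊤ ∧
        (∀ a b : Fin p ⊕ Fin p, a ≠ b →
          ⟪(c a).1, (c b).1⟫ - ⟪(c a).2, (c b).2⟫ = 0) ∧
        (∀ a : Fin p ⊕ Fin p,
          ⟪(c a).1, (c a).1⟫ - ⟪(c a).2, (c a).2⟫ = 1 ∨
          ⟪(c a).1, (c a).1⟫ - ⟪(c a).2, (c a).2⟫ = -1)) := by
  have hsym : ∀ X Y : V, β Y X = ((β X Y).1, -(β X Y).2) := by
    intro X Y
    rw [hβ Y X, hβ X Y]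
    refine Prod.ext ?_ ?_
    · show α Y X + α (J Y) (J X) = α X Y + α (J X) (J Y)
      rw [hα Y X, hα (J Y) (J X)]
    · show α Y (J X) - α (J Y) X = -(α X (J Y) - α (J X) Y)
      rw [hα Y (J X), hα (J Y) X]
      abel
  have hlin : ∀ X Y : V, β (J X) Y = (-(β X Y).2, (β X Y).1) := by
    intro X Y
    have hJJ : ∀ v : V, α (J (J X)) v = -(α X v) := by
      intro v
      rw [hJ X, map_neg, LinearMap.neg_apply]
    rw [hβ (J X) Y, hβ X Y]
    refine Prod.ext ?_ ?_
    · show α (J X) Y + α (J (J X)) (J Y) = -(α X (J Y) - α (J X) Y)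
      rw [hJJ (J Y)]
      abel
    · show α (J X) (J Y) - α (J (J X)) Y = α X Y + α (J X) (J Y)
      rw [hJJ Y]
      abel
  exact stmt13_key p n hpn V U hV hU J hJ β hsym hlin hflat hnul
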